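/- Let G and H be graphs, f : G → H a graph homomorphism, v a non-isolated vertex of G, and w = f(v). Then: (a) for any ×-homotopy h : G × I_n → H from f to f, the ≃₂-class in π₁²(H,w) of the closed walk (h(v,0), h(v′,0), h(v,1), h(v′,1), …, h(v′,n−1), h(v,n)) does not depend on the choice of the neighbor v′ of v; and (b) the set Π(f,v) of realizable elements is a subgroup of π₁²(H,w) contained in the even part π₁²(H,w)_ev. -/

import Mathlib

structure RGraph where
  V : Type
  E : V → V → Prop
  symm : ∀ {x y}, E x y → E y x

def IsGraphHom (G H : RGraph) (f : G.V → H.V) : Prop :=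
  ∀ {x y}, G.E x y → H.E (f x) (f y)

structure Walk (G : RGraph) (a b : G.V) where
  len : ℕ
  toFun : ℕ → G.V
  start_eq : toFun 0 = a
  end_eq : toFun len = b
  adj : ∀ i, i < len → G.E (toFun i) (toFun (i + 1))

structure MultiHom (G H : RGraph) where
  toFun : G.V → Set H.V
  nonempty : ∀ x, (toFun x).Nonempty
  edge : ∀ {x y}, G.E x y → ∀ a ∈ toFun x, ∀ b ∈ toFun y, H.E a b

def MultiHom.le {G H : RGraph} (η η' : MultiHom G H) : Prop :=
  ∀ x, η.toFun x ⊆ η'.toFun x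

def SameComponent {G H : RGraph} (η η' : MultiHom G H) : Prop :=
  Relation.ReflTransGen (fun a b => MultiHom.le a b ∨ MultiHom.le b a) η η'

def ofHom {G H : RGraph} (f : G.V → H.V) (hf : IsGraphHom G H f) : MultiHom G H where
  toFun x := {f x}
  nonempty x := ⟨f x, rfl⟩
  edge := by
    intro x y hxy a ha b hb
    rw [Set.mem_singleton_iff] at ha hb
    subst ha; subst hb
    exact hf hxy

def prodI (G : RGraph) (n : ℕ) : RGraph where
  V := G.V × Fin (n + 1)
  E := fun p q => G.E p.1 q.1 ∧ p.2.val ≤ q.2.val + 1 ∧ q.2.val ≤ p.2.val + 1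
  symm := by
    rintro p q ⟨h1, h2, h3⟩
    exact ⟨G.symm h1, h3, h2⟩

def MoveA {G : RGraph} {a b : G.V} (γ δ : Walk G a b) : Prop :=
  δ.len = γ.len + 2 ∧ ∃ k ≤ γ.len,
    (∀ i ≤ k, δ.toFun i = γ.toFun i) ∧
    (∀ i, k ≤ i → i ≤ γ.len → δ.toFun (i + 2) = γ.toFun i)

def MoveB {G : RGraph} {a b : G.V} (γ δ : Walk G a b) : Prop :=
  γ.len = δ.len ∧ ∃ j, ∀ i ≤ γ.len, i ≠ j → γ.toFun i = δ.toFun i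

def Eqv1 {G : RGraph} {a b : G.V} : Walk G a b → Walk G a b → Prop :=
  Relation.EqvGen MoveA

def Eqv2 {G : RGraph} {a b : G.V} : Walk G a b → Walk G a b → Prop :=
  Relation.EqvGen (fun γ δ => MoveA γ δ ∨ MoveB γ δ)

noncomputable def RGraph.dist (G : RGraph) (a b : G.V) : ℕ :=
  sInf {n | ∃ γ : Walk G a b, γ.len = n}

def RGraph.Connected (G : RGraph) : Prop := ∀ a b : G.V, Nonempty (Walk G a b)

def RGraph.Bipartite (G : RGraph) : Prop :=
  ∃ c : G.V → ZMod 2, ∀ {x y}, G.E x y → c x ≠ c y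

def constWalk {G : RGraph} (a : G.V) : Walk G a a :=
  ⟨0, fun _ => a, rfl, rfl, fun i hi => absurd hi (by omega)⟩

def Walk.concat {G : RGraph} {a b c : G.V} (γ : Walk G a b) (δ : Walk G b c) :
    Walk G a c where
  len := γ.len + δ.len
  toFun i := if i ≤ γ.len then γ.toFun i else δ.toFun (i - γ.len)
  start_eq := by simp [γ.start_eq]
  end_eq := by
    by_cases h : δ.len = 0
    · have hbc : b = c := by
        have h1 := δ.end_eq
        rw [h, δ.start_eq] at h1
        exact h1
      simp [h, γ.end_eq, hbc]
    · have h1 : ¬ (γ.len + δ.len ≤ γ.len) := by omega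
      try dsimp only
      rw [if_neg h1]
      have h2 : γ.len + δ.len - γ.len = δ.len := by omega
      rw [h2, δ.end_eq]
  adj := by
    intro i hi
    try dsimp only
    rcases lt_trichotomy i γ.len with h | h | h
    · rw [if_pos (by omega : i ≤ γ.len), if_pos (by omega : i + 1 ≤ γ.len)]
      exact γ.adj i h
    · have hδ : 0 < δ.len := by omega
      rw [if_pos (by omega : i ≤ γ.len), if_neg (by omega : ¬ i + 1 ≤ γ.len)]
      have h2 : i + 1 - γ.len = 1 := by omega
      rw [h2, h, γ.end_eq]
      have h3 := δ.adj 0 hδ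
      rw [δ.start_eq] at h3
      exact h3
    · rw [if_neg (by omega : ¬ i ≤ γ.len), if_neg (by omega : ¬ i + 1 ≤ γ.len)]
      have h2 : i + 1 - γ.len = (i - γ.len) + 1 := by omega
      rw [h2]
      exact δ.adj (i - γ.len) (by omega)

def Walk.reverse {G : RGraph} {a b : G.V} (γ : Walk G a b) : Walk G b a where
  len := γ.len
  toFun i := γ.toFun (γ.len - i)
  start_eq := by simp [γ.end_eq]
  end_eq := by simp [γ.start_eq]
  adj := by
    intro i hi
    have h1 : γ.len - i = (γ.len - (i + 1)) + 1 := by omega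
    have h2 := γ.adj (γ.len - (i + 1)) (by omega)
    rw [← h1] at h2
    exact G.symm h2

def Walk.map {G H : RGraph} (f : G.V → H.V) (hf : IsGraphHom G H f) {a b : G.V}
    (γ : Walk G a b) : Walk H (f a) (f b) where
  len := γ.len
  toFun i := f (γ.toFun i)
  start_eq := by (try dsimp only); rw [γ.start_eq]
  end_eq := by (try dsimp only); rw [γ.end_eq]
  adj := fun i hi => hf (γ.adj i hi)

def Walk.pow {G : RGraph} {a : G.V} (γ : Walk G a a) : ℕ → Walk G a a
  | 0 => constWalk a
  | n + 1 => (Walk.pow γ n).concat γ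

def Walk.zpow {G : RGraph} {a : G.V} (γ : Walk G a a) : ℤ → Walk G a a
  | Int.ofNat n => γ.pow n
  | Int.negSucc n => γ.reverse.pow (n + 1)
def finClip (n t : ℕ) : Fin (n + 1) := ⟨min t n, by omega⟩

def realizedWalk {G H : RGraph} {n : ℕ} (h : (prodI G n).V → H.V)
    (hh : IsGraphHom (prodI G n) H h) {v v' : G.V} (hvv' : G.E v v')
    {w : H.V} (h0 : h (v, finClip n 0) = w) (hN : h (v, finClip n n) = w) :
    Walk H w w where
  len := 2 * n
  toFun i := if i % 2 = 0 then h (v, finClip n (i / 2)) else h (v', finClip n (i / 2))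
  start_eq := by
    try dsimp only
    rw [if_pos (by norm_num : (0:ℕ) % 2 = 0), Nat.zero_div]
    exact h0
  end_eq := by
    try dsimp only
    rw [if_pos (by omega : (2 * n) % 2 = 0)]
    have h2 : 2 * n / 2 = n := by omega
    rw [h2]
    exact hN
  adj := by
    intro i hi
    try dsimp only
    rcases Nat.even_or_odd i with he | ho
    · obtain ⟨t, ht⟩ := he
      rw [if_pos (by omega : i % 2 = 0), if_neg (by omega : ¬ (i + 1) % 2 = 0)]
      have h4 : (i + 1) / 2 = i / 2 := by omega
      rw [h4]
      refine hh ⟨hvv', ?_, ?_⟩ <;> (try dsimp only; omega)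
    · obtain ⟨t, ht⟩ := ho
      rw [if_neg (by omega : ¬ i % 2 = 0), if_pos (by omega : (i + 1) % 2 = 0)]
      refine hh ⟨G.symm hvv', ?_, ?_⟩ <;> (dsimp only [finClip]; omega)

def Realizable {G H : RGraph} (f : G.V → H.V) (v : G.V) (ω : Walk H (f v) (f v)) : Prop :=
  ∃ (n : ℕ) (h : (prodI G n).V → H.V) (hh : IsGraphHom (prodI G n) H h)
    (hs : ∀ x, h (x, finClip n 0) = f x) (he : ∀ x, h (x, finClip n n) = f x)
    (v' : G.V) (_ : G.E v v'),
    Eqv2 ω (realizedWalk h hh ‹G.E v v'› (hs v) (he v))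
def SquareFree (G : RGraph) : Prop :=
  (∀ x, ¬ G.E x x) ∧
  ¬ ∃ a b c d : G.V, a ≠ b ∧ a ≠ c ∧ a ≠ d ∧ b ≠ c ∧ b ≠ d ∧ c ≠ d ∧
    G.E a b ∧ G.E b c ∧ G.E c d ∧ G.E d a

def nbhd (G : RGraph) (v : G.V) : Set G.V := {y | G.E v y}

def nbhd2 (G : RGraph) (v : G.V) : Set G.V := {z | ∃ y, G.E v y ∧ G.E y z}

def IsGraphCovering (G H : RGraph) (p : G.V → H.V) : Prop :=
  IsGraphHom G H p ∧ ∀ v : G.V, Set.BijOn p (nbhd G v) (nbhd H (p v))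

def Is2CoveringMap (G H : RGraph) (p : G.V → H.V) : Prop :=
  IsGraphHom G H p ∧ ∀ v : G.V,
    Set.BijOn p (nbhd G v) (nbhd H (p v)) ∧ Set.BijOn p (nbhd2 G v) (nbhd2 H (p v))

def pushforward {G H1 H2 : RGraph} (p : H1.V → H2.V) (hp : IsGraphHom H1 H2 p)
    (η : MultiHom G H1) : MultiHom G H2 where
  toFun x := p '' η.toFun x
  nonempty x := (η.nonempty x).image p
  edge := by
    rintro x y hxy a ⟨a', ha', rfl⟩ b ⟨b', hb', rfl⟩
    exact hp (η.edge hxy a' ha' b' hb')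

def IsCycleWalk {G : RGraph} {a : G.V} (γ : Walk G a a) : Prop :=
  3 ≤ γ.len ∧ ∀ i j, i < γ.len → j < γ.len → γ.toFun i = γ.toFun j → i = j

def IsTree (T : RGraph) : Prop :=
  (∀ x, ¬ T.E x x) ∧ (∀ a b : T.V, Nonempty (Walk T a b)) ∧
    ∀ (a : T.V) (γ : Walk T a a), ¬ IsCycleWalk γ

def IsPath {G : RGraph} {a b : G.V} (γ : Walk G a b) : Prop :=
  ∀ i j, i ≤ γ.len → j ≤ γ.len → γ.toFun i = γ.toFun j → i = j

def OnWalk {G : RGraph} {a b : G.V} (γ : Walk G a b) (y : G.V) : Prop :=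
  ∃ i ≤ γ.len, γ.toFun i = y

def CrossHomotopic (G H : RGraph) (f g : G.V → H.V) : Prop :=
  ∃ (n : ℕ) (h : (prodI G n).V → H.V), IsGraphHom (prodI G n) H h ∧
    (∀ x, h (x, finClip n 0) = f x) ∧ (∀ x, h (x, finClip n n) = g x)

def quotGraph (G : RGraph) (Γ : Type) [Group Γ] [MulAction Γ G.V] : RGraph where
  V := Quotient (MulAction.orbitRel Γ G.V)
  E := fun α β => ∃ x y : G.V, Quotient.mk (MulAction.orbitRel Γ G.V) x = α ∧
        Quotient.mk (MulAction.orbitRel Γ G.V) y = β ∧ G.E x y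
  symm := by
    rintro α β ⟨x, y, hx, hy, hxy⟩
    exact ⟨y, x, hy, hx, G.symm hxy⟩
section Aux

variable {G H : RGraph}

lemma eqv2_refl {a b : G.V} (γ : Walk G a b) : Eqv2 γ γ := Relation.EqvGen.refl γ

lemma eqv2_symm {a b : G.V} {γ δ : Walk G a b} (h : Eqv2 γ δ) : Eqv2 δ γ :=
  Relation.EqvGen.symm _ _ h

lemma eqv2_trans {a b : G.V} {γ δ ρ : Walk G a b} (h1 : Eqv2 γ δ) (h2 : Eqv2 δ ρ) :
    Eqv2 γ ρ := Relation.EqvGen.trans _ _ _ h1 h2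

lemma moveB_of_eq_on {a b : G.V} {γ δ : Walk G a b}
    (hlen : γ.len = δ.len) (h : ∀ i ≤ γ.len, γ.toFun i = δ.toFun i) : MoveB γ δ :=
  ⟨hlen, γ.len + 1, fun i hi _ => h i hi⟩

lemma eqv2_of_eq_on {a b : G.V} {γ δ : Walk G a b}
    (hlen : γ.len = δ.len) (h : ∀ i ≤ γ.len, γ.toFun i = δ.toFun i) : Eqv2 γ δ :=
  Relation.EqvGen.rel _ _ (Or.inr (moveB_of_eq_on hlen h))

def mixWalk {a b : G.V} (γ δ : Walk G a b) (hlen : δ.len = γ.len)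
    (hcross : ∀ i, i < γ.len → G.E (δ.toFun i) (γ.toFun (i + 1))) (t : ℕ) :
    Walk G a b where
  len := γ.len
  toFun i := if i < t then δ.toFun i else γ.toFun i
  start_eq := by
    try dsimp only
    split
    · exact δ.start_eq
    · exact γ.start_eq
  end_eq := by
    try dsimp only
    split
    · rw [← hlen]; exact δ.end_eq
    · exact γ.end_eq
  adj := by
    intro i hi
    try dsimp only
    rcases lt_trichotomy (i + 1) t with h1 | h1 | h1
    · rw [if_pos (by omega), if_pos h1]
      exact δ.adj i (by omega)
    · rw [if_pos (by omega), if_neg (by omega)]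
      exact hcross i hi
    · rw [if_neg (by omega), if_neg (by omega)]
      exact γ.adj i hi

lemma eqv2_of_cross {a b : G.V} {γ δ : Walk G a b} (hlen : δ.len = γ.len)
    (hcross : ∀ i, i < γ.len → G.E (δ.toFun i) (γ.toFun (i + 1))) : Eqv2 γ δ := by
  have key : ∀ t, Eqv2 γ (mixWalk γ δ hlen hcross t) := by
    intro t
    induction t with
    | zero =>
      refine eqv2_of_eq_on rfl fun i hi => ?_
      simp [mixWalk]
    | succ t ih =>
      refine eqv2_trans ih (Relation.EqvGen.rel _ _ (Or.inr ⟨rfl, t, fun i hi hij => ?_⟩))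
      show (if i < t then δ.toFun i else γ.toFun i) = if i < t + 1 then δ.toFun i else γ.toFun i
      by_cases h : i < t
      · rw [if_pos h, if_pos (by omega)]
      · rw [if_neg h, if_neg (by omega)]
  refine eqv2_trans (key (γ.len + 1)) (eqv2_of_eq_on hlen.symm fun i hi => ?_)
  show (if i < γ.len + 1 then δ.toFun i else γ.toFun i) = δ.toFun i
  rw [if_pos (by exact Nat.lt_succ_of_le hi)]

lemma eqv2_parity {a b : G.V} {γ δ : Walk G a b} (h : Eqv2 γ δ) : γ.len % 2 = δ.len % 2 := by
  induction h with
  | rel x y hxy => rcases hxy with ⟨hl, -⟩ | ⟨hl, -⟩ <;> omega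
  | refl => rfl
  | symm _ _ _ ih => omega
  | trans _ _ _ _ _ ih1 ih2 => omega

end Aux
section Aux2

variable {G : RGraph}

lemma concat_len {a b c : G.V} (γ : Walk G a b) (ρ : Walk G b c) :
    (γ.concat ρ).len = γ.len + ρ.len := rfl

lemma concat_toFun {a b c : G.V} (γ : Walk G a b) (ρ : Walk G b c) (i : ℕ) :
    (γ.concat ρ).toFun i = if i ≤ γ.len then γ.toFun i else ρ.toFun (i - γ.len) := rfl

lemma eqv2_concat_left {a b c : G.V} {γ δ : Walk G a b} (ρ : Walk G b c)
    (h : Eqv2 γ δ) : Eqv2 (γ.concat ρ) (δ.concat ρ) := by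
  induction h with
  | rel x y hxy =>
    refine Relation.EqvGen.rel _ _ ?_
    rcases hxy with ⟨hl, k, hk, h1, h2⟩ | ⟨hl, j, hB⟩
    · left
      refine ⟨by simp only [concat_len]; omega, k, by simp only [concat_len]; omega,
        fun i hi => ?_, fun i hki hi => ?_⟩
      · simp only [concat_toFun]
        rw [if_pos (by omega), if_pos (by omega)]
        exact h1 i hi
      · simp only [concat_len] at hi
        simp only [concat_toFun]
        by_cases hx : i ≤ x.len
        · rw [if_pos (by omega), if_pos hx]
          exact h2 i hki hx
        · rw [if_neg (by omega), if_neg hx]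
          have : i + 2 - y.len = i - x.len := by omega
          rw [this]
    · right
      refine ⟨by simp only [concat_len]; omega, j, fun i hi hij => ?_⟩
      simp only [concat_toFun]
      by_cases hx : i ≤ x.len
      · rw [if_pos hx, if_pos (by omega)]
        exact hB i hx hij
      · rw [if_neg hx, if_neg (by omega)]
        rw [hl]
  | refl x => exact eqv2_refl _
  | symm x y _ ih => exact eqv2_symm ih
  | trans x y z _ _ ih1 ih2 => exact eqv2_trans ih1 ih2

lemma eqv2_concat_right {a b c : G.V} (ρ : Walk G a b) {γ δ : Walk G b c}
    (h : Eqv2 γ δ) : Eqv2 (ρ.concat γ) (ρ.concat δ) := by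
  induction h with
  | rel x y hxy =>
    refine Relation.EqvGen.rel _ _ ?_
    rcases hxy with ⟨hl, k, hk, h1, h2⟩ | ⟨hl, j, hB⟩
    · left
      refine ⟨by simp only [concat_len]; omega, ρ.len + k,
        by simp only [concat_len]; omega, fun i hi => ?_, fun i hki hi => ?_⟩
      · simp only [concat_toFun]
        by_cases hx : i ≤ ρ.len
        · rw [if_pos hx, if_pos hx]
        · rw [if_neg hx, if_neg hx]
          exact h1 _ (by omega)
      · simp only [concat_len] at hi
        simp only [concat_toFun]
        by_cases hx : i ≤ ρ.len
        · -- then i = ρ.len and k = 0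
          have hik : i = ρ.len := by omega
          have hk0 : k = 0 := by omega
          rw [if_neg (by omega), if_pos hx]
          have e1 : i + 2 - ρ.len = 2 := by omega
          rw [e1]
          have e2 : y.toFun 2 = x.toFun 0 := h2 0 (by omega) (by omega)
          rw [e2, x.start_eq, hik, ρ.end_eq]
        · rw [if_neg (by omega), if_neg hx]
          have : i + 2 - ρ.len = (i - ρ.len) + 2 := by omega
          rw [this]
          exact h2 _ (by omega) (by omega)
    · right
      refine ⟨by simp only [concat_len]; omega, ρ.len + j, fun i hi hij => ?_⟩
      simp only [concat_toFun]
      by_cases hx : i ≤ ρ.len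
      · rw [if_pos hx, if_pos hx]
      · rw [if_neg hx, if_neg hx]
        exact hB _ (by simp only [concat_len] at hi; omega) (by omega)
  | refl x => exact eqv2_refl _
  | symm x y _ ih => exact eqv2_symm ih
  | trans x y z _ _ ih1 ih2 => exact eqv2_trans ih1 ih2

lemma reverse_len {a b : G.V} (γ : Walk G a b) : γ.reverse.len = γ.len := rfl

lemma reverse_toFun {a b : G.V} (γ : Walk G a b) (i : ℕ) :
    γ.reverse.toFun i = γ.toFun (γ.len - i) := rfl

lemma eqv2_reverse {a b : G.V} {γ δ : Walk G a b} (h : Eqv2 γ δ) :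
    Eqv2 γ.reverse δ.reverse := by
  induction h with
  | rel x y hxy =>
    refine Relation.EqvGen.rel _ _ ?_
    rcases hxy with ⟨hl, k, hk, h1, h2⟩ | ⟨hl, j, hB⟩
    · left
      refine ⟨by simp only [reverse_len]; omega, x.len - k,
        by simp only [reverse_len]; omega, fun i hi => ?_, fun i hki hi => ?_⟩
      · simp only [reverse_toFun, reverse_len] at *
        have e : y.len - i = (x.len - i) + 2 := by omega
        rw [e]
        exact h2 _ (by omega) (by omega)
      · simp only [reverse_toFun, reverse_len] at *
        have e : y.len - (i + 2) = x.len - i := by omega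
        rw [e]
        exact h1 _ (by omega)
    · right
      refine ⟨by simp only [reverse_len]; omega, x.len - j, fun i hi hij => ?_⟩
      simp only [reverse_toFun, reverse_len] at *
      rw [← hl]
      by_cases hji : j ≤ x.len
      · exact hB _ (by omega) (by omega)
      · exact hB _ (by omega) (by omega)
  | refl x => exact eqv2_refl _
  | symm x y _ ih => exact eqv2_symm ih
  | trans x y z _ _ ih1 ih2 => exact eqv2_trans ih1 ih2

end Aux2
section Aux3

variable {G H : RGraph}

lemma realized_len {n : ℕ} (h : (prodI G n).V → H.V)
    (hh : IsGraphHom (prodI G n) H h) {v v' : G.V} (hvv' : G.E v v')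
    {w : H.V} (h0 : h (v, finClip n 0) = w) (hN : h (v, finClip n n) = w) :
    (realizedWalk h hh hvv' h0 hN).len = 2 * n := rfl

lemma realized_toFun {n : ℕ} (h : (prodI G n).V → H.V)
    (hh : IsGraphHom (prodI G n) H h) {v v' : G.V} (hvv' : G.E v v')
    {w : H.V} (h0 : h (v, finClip n 0) = w) (hN : h (v, finClip n n) = w) (i : ℕ) :
    (realizedWalk h hh hvv' h0 hN).toFun i =
      if i % 2 = 0 then h (v, finClip n (i / 2)) else h (v', finClip n (i / 2)) := rfl

lemma finClip_val (n t : ℕ) : (finClip n t).val = min t n := rfl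

lemma realized_indep {n : ℕ} (h : (prodI G n).V → H.V)
    (hh : IsGraphHom (prodI G n) H h) {v v' v'' : G.V} (hvv' : G.E v v')
    (hvv'' : G.E v v'')
    {w : H.V} (h0 : h (v, finClip n 0) = w) (hN : h (v, finClip n n) = w) :
    Eqv2 (realizedWalk h hh hvv' h0 hN) (realizedWalk h hh hvv'' h0 hN) := by
  refine eqv2_of_cross ?_ fun i hi => ?_
  · rfl
  rw [realized_len] at hi
  rw [realized_toFun, realized_toFun]
  rcases Nat.even_or_odd i with ⟨t, ht⟩ | ⟨t, ht⟩
  · rw [if_pos (by omega), if_neg (by omega)]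
    exact hh ⟨hvv', by simp only [finClip_val]; omega, by simp only [finClip_val]; omega⟩
  · rw [if_neg (by omega), if_pos (by omega)]
    exact hh ⟨G.symm hvv'', by simp only [finClip_val]; omega,
      by simp only [finClip_val]; omega⟩

end Aux3
section Aux4

variable {G H : RGraph}

def combHom {n1 n2 : ℕ} (h1 : (prodI G n1).V → H.V) (h2 : (prodI G n2).V → H.V) :
    (prodI G (n1 + n2)).V → H.V :=
  fun p => if p.2.val ≤ n1 then h1 (p.1, finClip n1 p.2.val)
    else h2 (p.1, finClip n2 (p.2.val - n1))

lemma combHom_isHom {n1 n2 : ℕ} {h1 : (prodI G n1).V → H.V} {h2 : (prodI G n2).V → H.V}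
    (hh1 : IsGraphHom (prodI G n1) H h1) (hh2 : IsGraphHom (prodI G n2) H h2)
    (hmid : ∀ x, h1 (x, finClip n1 n1) = h2 (x, finClip n2 0)) :
    IsGraphHom (prodI G (n1 + n2)) H (combHom h1 h2) := by
  rintro ⟨x, i⟩ ⟨y, j⟩ ⟨hE, hle1, hle2⟩
  replace hle1 : i.val ≤ j.val + 1 := hle1
  replace hle2 : j.val ≤ i.val + 1 := hle2
  have hi' : i.val ≤ n1 + n2 := by omega
  have hj' : j.val ≤ n1 + n2 := by omega
  simp only [combHom]
  by_cases hi : i.val ≤ n1 <;> by_cases hj : j.val ≤ n1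
  · rw [if_pos hi, if_pos hj]
    exact hh1 ⟨hE, by simp only [finClip_val]; omega, by simp only [finClip_val]; omega⟩
  · rw [if_pos hi, if_neg hj]
    have hiv : i.val = n1 := by omega
    have : finClip n1 i.val = finClip n1 n1 := by rw [hiv]
    rw [this, hmid]
    exact hh2 ⟨hE, by simp only [finClip_val]; omega,
      by simp only [finClip_val]; omega⟩
  · rw [if_neg hi, if_pos hj]
    have hjv : j.val = n1 := by omega
    have : finClip n1 j.val = finClip n1 n1 := by rw [hjv]
    rw [this, hmid]
    exact hh2 ⟨hE, by simp only [finClip_val]; omega,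
      by simp only [finClip_val]; omega⟩
  · rw [if_neg hi, if_neg hj]
    exact hh2 ⟨hE, by simp only [finClip_val]; omega,
      by simp only [finClip_val]; omega⟩

lemma combHom_start {n1 n2 : ℕ} (h1 : (prodI G n1).V → H.V) (h2 : (prodI G n2).V → H.V)
    (x : G.V) : combHom h1 h2 (x, finClip (n1 + n2) 0) = h1 (x, finClip n1 0) := by
  simp only [combHom, finClip_val]
  erw [if_pos (by omega)]
  congr 2

lemma combHom_end {n1 n2 : ℕ} (h1 : (prodI G n1).V → H.V) (h2 : (prodI G n2).V → H.V)
    (hmid : ∀ x, h1 (x, finClip n1 n1) = h2 (x, finClip n2 0)) (x : G.V) :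
    combHom h1 h2 (x, finClip (n1 + n2) (n1 + n2)) = h2 (x, finClip n2 n2) := by
  simp only [combHom, finClip_val]
  by_cases h : min (n1 + n2) (n1 + n2) ≤ n1
  · erw [if_pos h]
    have hn2 : n2 = 0 := by omega
    have e1 : finClip n1 (min (n1 + n2) (n1 + n2)) = finClip n1 n1 := by
      apply Fin.ext; simp only [finClip_val]; omega
    rw [e1, hmid]
    congr 2
    apply Fin.ext
    simp only [finClip_val]
    omega
  · erw [if_neg h]
    congr 2
    apply Fin.ext
    simp only [finClip_val]
    omega

def revHom {n : ℕ} (h : (prodI G n).V → H.V) : (prodI G n).V → H.V :=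
  fun p => h (p.1, finClip n (n - p.2.val))

lemma revHom_isHom {n : ℕ} {h : (prodI G n).V → H.V}
    (hh : IsGraphHom (prodI G n) H h) : IsGraphHom (prodI G n) H (revHom h) := by
  rintro ⟨x, i⟩ ⟨y, j⟩ ⟨hE, hle1, hle2⟩
  replace hle1 : i.val ≤ j.val + 1 := hle1
  replace hle2 : j.val ≤ i.val + 1 := hle2
  exact hh ⟨hE, by simp only [finClip_val]; omega, by simp only [finClip_val]; omega⟩

lemma revHom_start {n : ℕ} (h : (prodI G n).V → H.V) (x : G.V) :
    revHom h (x, finClip n 0) = h (x, finClip n n) := by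
  simp only [revHom]
  congr 2

lemma revHom_end {n : ℕ} (h : (prodI G n).V → H.V) (x : G.V) :
    revHom h (x, finClip n n) = h (x, finClip n 0) := by
  simp only [revHom]
  congr 2
  apply Fin.ext
  simp only [finClip_val]
  omega

end Aux4
section Aux5

variable {G H : RGraph}

lemma realized_comb {n1 n2 : ℕ} {h1 : (prodI G n1).V → H.V} {h2 : (prodI G n2).V → H.V}
    (hh1 : IsGraphHom (prodI G n1) H h1) (hh2 : IsGraphHom (prodI G n2) H h2)
    {v v' : G.V} (hvv' : G.E v v') {w : H.V}
    (h10 : h1 (v, finClip n1 0) = w) (h1N : h1 (v, finClip n1 n1) = w)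
    (h20 : h2 (v, finClip n2 0) = w) (h2N : h2 (v, finClip n2 n2) = w)
    (hmid : ∀ x, h1 (x, finClip n1 n1) = h2 (x, finClip n2 0))
    (hhc : IsGraphHom (prodI G (n1 + n2)) H (combHom h1 h2))
    (hc0 : combHom h1 h2 (v, finClip (n1 + n2) 0) = w)
    (hcN : combHom h1 h2 (v, finClip (n1 + n2) (n1 + n2)) = w) :
    Eqv2 ((realizedWalk h1 hh1 hvv' h10 h1N).concat (realizedWalk h2 hh2 hvv' h20 h2N))
      (realizedWalk (combHom h1 h2) hhc hvv' hc0 hcN) := by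
  refine eqv2_of_eq_on (by simp only [concat_len, realized_len]; ring) fun i hi => ?_
  simp only [concat_len, realized_len] at hi
  rw [concat_toFun, realized_toFun, realized_toFun, realized_toFun]
  simp only [realized_len, combHom, finClip_val]
  rcases Nat.even_or_odd i with ⟨t, ht⟩ | ⟨t, ht⟩
  · erw [if_pos (by omega : i % 2 = 0)]
    by_cases hle : i ≤ 2 * n1
    · erw [if_pos hle, if_pos (by omega : i % 2 = 0),
        if_pos (by omega : min (i / 2) (n1 + n2) ≤ n1)]
      congr 2
      apply Fin.ext
      simp only [finClip_val]
      omega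
    · erw [if_neg hle, if_pos (by omega : (i - 2 * n1) % 2 = 0),
        if_neg (by omega : ¬ min (i / 2) (n1 + n2) ≤ n1),
        if_pos (by omega : i % 2 = 0)]
      congr 2
      apply Fin.ext
      simp only [finClip_val]
      omega
  · erw [if_neg (by omega : ¬ i % 2 = 0)]
    by_cases hle : i ≤ 2 * n1
    · erw [if_pos hle, if_neg (by omega : ¬ i % 2 = 0),
        if_pos (by omega : min (i / 2) (n1 + n2) ≤ n1)]
      congr 2
      apply Fin.ext
      simp only [finClip_val]
      omega
    · erw [if_neg hle, if_neg (by omega : ¬ (i - 2 * n1) % 2 = 0)]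
      by_cases hmidc : min (i / 2) (n1 + n2) ≤ n1
      · erw [if_pos hmidc]
        have e : finClip n1 (min (i / 2) (n1 + n2)) = finClip n1 n1 := by
          apply Fin.ext; simp only [finClip_val]; omega
        erw [e, hmid v', if_neg (by omega : ¬ i % 2 = 0), if_pos hmidc]
        congr 2
        apply Fin.ext
        simp only [finClip_val]
        omega
      · erw [if_neg hmidc, if_neg (by omega : ¬ i % 2 = 0), if_neg hmidc]
        congr 2
        apply Fin.ext
        simp only [finClip_val]
        omega

lemma realized_rev {n : ℕ} {h : (prodI G n).V → H.V}
    (hh : IsGraphHom (prodI G n) H h) {v v' : G.V} (hvv' : G.E v v') {w : H.V}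
    (h0 : h (v, finClip n 0) = w) (hN : h (v, finClip n n) = w)
    (hhr : IsGraphHom (prodI G n) H (revHom h))
    (hr0 : revHom h (v, finClip n 0) = w) (hrN : revHom h (v, finClip n n) = w) :
    Eqv2 (realizedWalk h hh hvv' h0 hN).reverse
      (realizedWalk (revHom h) hhr hvv' hr0 hrN) := by
  refine eqv2_symm (eqv2_of_cross ?_ fun i hi => ?_)
  · rfl
  · rw [realized_len] at hi
    rw [reverse_toFun, realized_len, realized_toFun, realized_toFun]
    simp only [revHom]
    rcases Nat.even_or_odd i with ⟨t, ht⟩ | ⟨t, ht⟩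
    · rw [if_pos (by omega : (2 * n - i) % 2 = 0),
        if_neg (by omega : ¬ (i + 1) % 2 = 0)]
      exact hh ⟨hvv', by simp only [finClip_val]; omega, by simp only [finClip_val]; omega⟩
    · rw [if_neg (by omega : ¬ (2 * n - i) % 2 = 0),
        if_pos (by omega : (i + 1) % 2 = 0)]
      exact hh ⟨G.symm hvv', by simp only [finClip_val]; omega,
        by simp only [finClip_val]; omega⟩

lemma realizable_const {f : G.V → H.V} (hf : IsGraphHom G H f) {v v' : G.V}
    (hvv' : G.E v v') : Realizable f v (constWalk (f v)) := by
  have hh : IsGraphHom (prodI G 0) H (fun p => f p.1) := fun hxy => hf hxy.1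
  refine ⟨0, fun p => f p.1, hh, fun x => rfl, fun x => rfl, v', hvv', ?_⟩
  refine eqv2_of_eq_on rfl fun i hi => ?_
  have h0 : i = 0 := Nat.le_zero.mp hi
  subst h0
  rfl

end Aux5
theorem statement_9 (G H : RGraph) (f : G.V → H.V) (hf : IsGraphHom G H f)
    (v : G.V) (hv : ∃ v' : G.V, G.E v v') :
    (∀ (n : ℕ) (h : (prodI G n).V → H.V) (hh : IsGraphHom (prodI G n) H h)
      (hs : ∀ x, h (x, finClip n 0) = f x) (he : ∀ x, h (x, finClip n n) = f x)
      (v' v'' : G.V) (hvv' : G.E v v') (hvv'' : G.E v v''),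
      Eqv2 (realizedWalk h hh hvv' (hs v) (he v))
        (realizedWalk h hh hvv'' (hs v) (he v))) ∧
    Realizable f v (constWalk (f v)) ∧
    (∀ ω₁ ω₂ : Walk H (f v) (f v), Realizable f v ω₁ → Realizable f v ω₂ →
      Realizable f v (ω₁.concat ω₂)) ∧
    (∀ ω : Walk H (f v) (f v), Realizable f v ω → Realizable f v ω.reverse) ∧
    (∀ ω ω' : Walk H (f v) (f v), Realizable f v ω → Eqv2 ω ω' → Realizable f v ω') ∧
    (∀ ω : Walk H (f v) (f v), Realizable f v ω → Even ω.len) := by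
  obtain ⟨v₀, hv₀⟩ := hv
  refine ⟨?_, ?_, ?_, ?_, ?_, ?_⟩
  · intro n h hh hs he v' v'' hvv' hvv''
    exact realized_indep h hh hvv' hvv'' (hs v) (he v)
  · exact realizable_const hf hv₀
  · rintro ω₁ ω₂ ⟨n1, h1, hh1, hs1, he1, u1, hu1, heq1⟩
      ⟨n2, h2, hh2, hs2, he2, u2, hu2, heq2⟩
    have hmid : ∀ x, h1 (x, finClip n1 n1) = h2 (x, finClip n2 0) :=
      fun x => (he1 x).trans (hs2 x).symm
    have hhc : IsGraphHom (prodI G (n1 + n2)) H (combHom h1 h2) :=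
      combHom_isHom hh1 hh2 hmid
    have hsc : ∀ x, combHom h1 h2 (x, finClip (n1 + n2) 0) = f x :=
      fun x => (combHom_start h1 h2 x).trans (hs1 x)
    have hec : ∀ x, combHom h1 h2 (x, finClip (n1 + n2) (n1 + n2)) = f x :=
      fun x => (combHom_end h1 h2 hmid x).trans (he2 x)
    refine ⟨n1 + n2, combHom h1 h2, hhc, hsc, hec, u1, hu1, ?_⟩
    have e2 : Eqv2 (realizedWalk h2 hh2 hu2 (hs2 v) (he2 v))
        (realizedWalk h2 hh2 hu1 (hs2 v) (he2 v)) :=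
      realized_indep h2 hh2 hu2 hu1 (hs2 v) (he2 v)
    have c1 : Eqv2 (ω₁.concat ω₂)
        ((realizedWalk h1 hh1 hu1 (hs1 v) (he1 v)).concat
          (realizedWalk h2 hh2 hu1 (hs2 v) (he2 v))) :=
      eqv2_trans (eqv2_concat_left _ heq1)
        (eqv2_concat_right _ (eqv2_trans heq2 e2))
    exact eqv2_trans c1 (realized_comb hh1 hh2 hu1 (hs1 v) (he1 v) (hs2 v) (he2 v)
      hmid hhc (hsc v) (hec v))
  · rintro ω ⟨n, h, hh, hs, he, u, hu, heq⟩
    have hhr : IsGraphHom (prodI G n) H (revHom h) := revHom_isHom hh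
    have hsr : ∀ x, revHom h (x, finClip n 0) = f x :=
      fun x => (revHom_start h x).trans (he x)
    have her : ∀ x, revHom h (x, finClip n n) = f x :=
      fun x => (revHom_end h x).trans (hs x)
    refine ⟨n, revHom h, hhr, hsr, her, u, hu, ?_⟩
    exact eqv2_trans (eqv2_reverse heq)
      (realized_rev hh hu (hs v) (he v) hhr (hsr v) (her v))
  · rintro ω ω' ⟨n, h, hh, hs, he, u, hu, heq⟩ hE
    exact ⟨n, h, hh, hs, he, u, hu, eqv2_trans (eqv2_symm hE) heq⟩
  · rintro ω ⟨n, h, hh, hs, he, u, hu, heq⟩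
    have hp := eqv2_parity heq
    rw [realized_len] at hp
    exact Nat.even_iff.mpr (by omega)
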